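/- arXiv:1411.0155 — 2 statements merged into one kernel-verified Lean document; each statement's English description precedes it below -/
import Mathlib

section
/- Suppose F(·,x,a) has bounded variation along x̄ uniformly over A, let δ̄>0 satisfy η^δ̄(T) < ∞, assume (C1) and (C2), and take any δ ∈ (0,δ̄). Then for every s̄ ∈ [S,T), every x ∈ x̄(s̄) + δ𝔹 and every a ∈ A, the set-valued right limit F(s̄⁺,x,a) := lim_{s↓s̄} F(s,x,a) exists (i.e. the Kuratowski upper and lower limits of F(s,x,a) as s↓s̄ coincide); and for every t̄ ∈ (S,T], every y ∈ x̄(t̄) + δ𝔹 and every a ∈ A, the set-valued left limit F(t̄⁻,y,a) := lim_{t↑t̄} F(t,y,a) exists. -/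
open Set Metric Filter MeasureTheory Pointwise
open scoped ENNReal Topology

noncomputable section

/-- Euclidean `n`-space `ℝⁿ`. -/
abbrev En (n : ℕ) : Type := EuclideanSpace ℝ (Fin n)

/-- A partition `{t₀ = S, t₁, …, t_N = t}` of the interval `[S, t]`. -/
structure IntervalPartition (S t : ℝ) where
  N : ℕ
  pts : ℕ → ℝ
  hN : 0 < N
  first : pts 0 = S
  last : pts N = t
  mono : ∀ i, i < N → pts i < pts (i + 1)

/-- `diam(𝒯) ≤ ε` : every subinterval of the partition has length at most `ε`. -/
def IntervalPartition.diamLE {S t : ℝ} (P : IntervalPartition S t) (ε : ℝ) : Prop :=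
  ∀ i, i < P.N → P.pts (i + 1) - P.pts i ≤ ε

/-- The sum `I^δ(𝒯) = Σᵢ sup { d_H(F(tᵢ₊₁,x,a), F(tᵢ,x,a)) :
x ∈ x̄([tᵢ,tᵢ₊₁]) + δ𝔹, a ∈ A }` for a multifunction `F` along `x̄`, uniformly over `A`. -/
noncomputable def mvSum {n k : ℕ} (F : ℝ → En n → En k → Set (En n))
    (xbar : ℝ → En n) (A : Set (En k)) (δ : ℝ) {S t : ℝ} (P : IntervalPartition S t) : ℝ≥0∞ :=
  ∑ i ∈ Finset.range P.N,
    ⨆ x ∈ xbar '' Set.Icc (P.pts i) (P.pts (i + 1)) + Metric.closedBall (0 : En n) δ,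
      ⨆ a ∈ A, EMetric.hausdorffEdist (F (P.pts (i + 1)) x a) (F (P.pts i) x a)

/-- The `(δ,ε)`-perturbed cumulative variation function `η^δ_ε(t)`:
the supremum of `I^δ(𝒯)` over partitions `𝒯` of `[S,t]` with `diam(𝒯) ≤ ε`.
(For `t = S` there are no partitions and the value is `0`.) -/
noncomputable def mvEtaEps {n k : ℕ} (F : ℝ → En n → En k → Set (En n))
    (xbar : ℝ → En n) (A : Set (En k)) (δ ε : ℝ) (S t : ℝ) : ℝ≥0∞ :=
  ⨆ (P : IntervalPartition S t) (_ : P.diamLE ε), mvSum F xbar A δ P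

/-- The `δ`-perturbed cumulative variation function `η^δ(t) = lim_{ε↓0} η^δ_ε(t)`
(the limit of the decreasing-in-`ε` family equals the infimum). -/
noncomputable def mvEtaDelta {n k : ℕ} (F : ℝ → En n → En k → Set (En n))
    (xbar : ℝ → En n) (A : Set (En k)) (δ : ℝ) (S t : ℝ) : ℝ≥0∞ :=
  ⨅ (ε : ℝ) (_ : 0 < ε), mvEtaEps F xbar A δ ε S t

/-- The cumulative variation function `η(t) = lim_{δ↓0} η^δ(t)`. -/
noncomputable def mvEta {n k : ℕ} (F : ℝ → En n → En k → Set (En n))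
    (xbar : ℝ → En n) (A : Set (En k)) (S t : ℝ) : ℝ≥0∞ :=
  ⨅ (δ : ℝ) (_ : 0 < δ), mvEtaDelta F xbar A δ S t

/-- `F(·,x,a)` has bounded variation along `x̄` uniformly over `A` : `η(T) < ∞`. -/
def HasBVAlongUniformly {n k : ℕ} (F : ℝ → En n → En k → Set (En n))
    (xbar : ℝ → En n) (A : Set (En k)) (S T : ℝ) : Prop :=
  mvEta F xbar A S T < ⊤

/-- Hypothesis (C1): nonempty closed values, measurability in `t` (Castaing-type
characterization via distance functions), and uniform boundedness near `x̄`. -/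
def HypC1 {n k : ℕ} (F : ℝ → En n → En k → Set (En n))
    (xbar : ℝ → En n) (A : Set (En k)) (S T δbar : ℝ) : Prop :=
  (∀ t ∈ Set.Icc S T, ∀ x : En n, ∀ a ∈ A, (F t x a).Nonempty ∧ IsClosed (F t x a)) ∧
  (∀ x : En n, ∀ a ∈ A, ∀ v : En n,
      Measurable fun t : ℝ => EMetric.infEdist v (F t x a)) ∧
  (∃ c : ℝ, 0 < c ∧ ∀ t ∈ Set.Icc S T, ∀ x ∈ Metric.closedBall (xbar t) δbar, ∀ a ∈ A,
      F t x a ⊆ Metric.closedBall (0 : En n) c)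

/-- Hypothesis (C2): uniform continuity of `(x,a) ↦ F(t,x,a)` near `x̄`,
with a modulus of continuity `γ`. -/
def HypC2 {n k : ℕ} (F : ℝ → En n → En k → Set (En n))
    (xbar : ℝ → En n) (A : Set (En k)) (S T δbar : ℝ) : Prop :=
  ∃ γ : ℝ → ℝ, (∀ s, 0 ≤ γ s) ∧ Tendsto γ (𝓝[>] (0 : ℝ)) (𝓝 0) ∧
    ∀ t ∈ Set.Icc S T, ∀ x ∈ Metric.closedBall (xbar t) δbar,
      ∀ x' ∈ Metric.closedBall (xbar t) δbar, ∀ a ∈ A, ∀ a' ∈ A,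
        F t x a ⊆ F t x' a' + Metric.closedBall (0 : En n) (γ (‖x - x'‖ + ‖a - a'‖))

/-- The Kuratowski upper limit of a family of sets along a filter `l`. -/
def kLimsup {α : Type*} [PseudoEMetricSpace α] (l : Filter ℝ) (G : ℝ → Set α) : Set α :=
  {v | ∀ ε : ℝ≥0∞, 0 < ε → ∃ᶠ s in l, EMetric.infEdist v (G s) < ε}

/-- The Kuratowski lower limit of a family of sets along a filter `l`. -/
def kLiminf {α : Type*} [PseudoEMetricSpace α] (l : Filter ℝ) (G : ℝ → Set α) : Set α :=
  {v | Tendsto (fun s => EMetric.infEdist v (G s)) l (𝓝 0)}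

/-- The set-valued limit along `l` exists: upper and lower Kuratowski limits coincide. -/
def KLimExists {α : Type*} [PseudoEMetricSpace α] (l : Filter ℝ) (G : ℝ → Set α) : Prop :=
  kLimsup l G = kLiminf l G

/-- The set-valued right limit `F(s̄⁺, x, a) = lim_{s ↓ s̄} F(s,x,a)` (with `s ∈ (s̄,T]`). -/
def rightLim {n k : ℕ} (F : ℝ → En n → En k → Set (En n)) (T sbar : ℝ)
    (x : En n) (a : En k) : Set (En n) :=
  kLiminf (𝓝[Set.Ioc sbar T] sbar) fun s => F s x a

/-- The set-valued left limit `F(t̄⁻, x, a) = lim_{t ↑ t̄} F(t,x,a)` (with `t ∈ [S,t̄)`). -/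
def leftLim {n k : ℕ} (F : ℝ → En n → En k → Set (En n)) (S tbar : ℝ)
    (x : En n) (a : En k) : Set (En n) :=
  kLiminf (𝓝[Set.Ico S tbar] tbar) fun s => F s x a


/-! ### Auxiliary lemmas -/

private lemma exists_nat_div_le {c ε : ℝ} (hc : 0 < c) (hε : 0 < ε) :
    ∃ M : ℕ, 0 < M ∧ c / M ≤ ε := by
  obtain ⟨M, hMgt⟩ := exists_nat_gt (c / ε)
  have hMr : (0:ℝ) < M := lt_trans (div_pos hc hε) hMgt
  refine ⟨M, Nat.cast_pos.1 hMr, ?_⟩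
  rw [div_le_iff₀ hMr]
  calc c ≤ (M:ℝ) * ε := ((div_lt_iff₀ hε).1 hMgt).le
    _ = ε * M := mul_comm _ _

private lemma partition_exists {S s ε : ℝ} (hSs : S < s) (hε : 0 < ε) :
    ∃ P : IntervalPartition S s, P.diamLE ε := by
  obtain ⟨M, hM, hMε⟩ := exists_nat_div_le (sub_pos.2 hSs) hε
  have hMr : (0:ℝ) < M := Nat.cast_pos.2 hM
  have hh : 0 < (s - S) / M := div_pos (sub_pos.2 hSs) hMr
  refine ⟨⟨M, fun i => S + i * ((s - S) / M), hM, by simp,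
    by have : (M:ℝ) ≠ 0 := hMr.ne'; field_simp; ring,
    fun i _ => by push_cast; nlinarith [hh]⟩, fun i _ => ?_⟩
  simp only [IntervalPartition.diamLE]
  push_cast
  nlinarith [hMε, hh]

private lemma hausdorffEdist_chain {α : Type*} [PseudoEMetricSpace α] (g : ℕ → Set α) :
    ∀ M : ℕ, EMetric.hausdorffEdist (g M) (g 0) ≤
      ∑ j ∈ Finset.range M, EMetric.hausdorffEdist (g (j + 1)) (g j)
  | 0 => by simp; exact EMetric.hausdorffEdist_self
  | (M + 1) => by
    rw [Finset.sum_range_succ]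
    calc EMetric.hausdorffEdist (g (M + 1)) (g 0)
        ≤ EMetric.hausdorffEdist (g (M + 1)) (g M) + EMetric.hausdorffEdist (g M) (g 0) :=
          EMetric.hausdorffEdist_triangle
      _ ≤ EMetric.hausdorffEdist (g (M + 1)) (g M) +
            ∑ j ∈ Finset.range M, EMetric.hausdorffEdist (g (j + 1)) (g j) :=
          add_le_add le_rfl (hausdorffEdist_chain g M)
      _ = _ := add_comm _ _

/-- The summand of `mvSum` over a single subinterval `[u,v]`. -/
private noncomputable def mvTerm {n k : ℕ} (F : ℝ → En n → En k → Set (En n))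
    (xbar : ℝ → En n) (A : Set (En k)) (δ : ℝ) (u v : ℝ) : ℝ≥0∞ :=
  ⨆ x ∈ xbar '' Set.Icc u v + Metric.closedBall (0 : En n) δ,
    ⨆ a ∈ A, EMetric.hausdorffEdist (F v x a) (F u x a)

private lemma mvSum_repr {n k : ℕ} (F : ℝ → En n → En k → Set (En n)) (xbar : ℝ → En n)
    (A : Set (En k)) (δ : ℝ) {S t : ℝ} (P : IntervalPartition S t) :
    mvSum F xbar A δ P =
      ∑ i ∈ Finset.range P.N, mvTerm F xbar A δ (P.pts i) (P.pts (i + 1)) := rfl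

private lemma le_mvTerm {n k : ℕ} (F : ℝ → En n → En k → Set (En n)) (xbar : ℝ → En n)
    (A : Set (En k)) (δ : ℝ) {u v : ℝ} (huv : u ≤ v) {x : En n} {a : En k}
    (hx : dist x (xbar u) ≤ δ) (ha : a ∈ A) :
    EMetric.hausdorffEdist (F v x a) (F u x a) ≤ mvTerm F xbar A δ u v := by
  have hxmem : x ∈ xbar '' Set.Icc u v + Metric.closedBall (0 : En n) δ := by
    rw [Set.mem_add]
    refine ⟨xbar u, ⟨u, ⟨le_rfl, huv⟩, rfl⟩, x - xbar u, ?_, by abel⟩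
    rw [mem_closedBall_zero_iff]
    simpa [dist_eq_norm] using hx
  exact le_iSup₂_of_le x hxmem (le_iSup₂_of_le a ha le_rfl)

/-- Points of the extension of a partition of `[S,s]` to `[S,t]` by a uniform grid. -/
private noncomputable def extPts {S s : ℝ} (P : IntervalPartition S s) (t : ℝ) (M : ℕ) (i : ℕ) : ℝ :=
  if i ≤ P.N then P.pts i else s + ((i : ℝ) - P.N) * ((t - s) / M)

private lemma extPts_of_le {S s : ℝ} (P : IntervalPartition S s) (t : ℝ) (M : ℕ) {i : ℕ}
    (h : i ≤ P.N) : extPts P t M i = P.pts i := if_pos h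

private lemma extPts_add {S s : ℝ} (P : IntervalPartition S s) (t : ℝ) (M : ℕ) (j : ℕ) :
    extPts P t M (P.N + j) = s + j * ((t - s) / M) := by
  rcases Nat.eq_zero_or_pos j with rfl | hj
  · simp [extPts, P.last]
  · have h : ¬(P.N + j ≤ P.N) := by omega
    simp only [extPts, h, if_false]
    push_cast
    ring

/-- Extend a partition of `[S,s]` to one of `[S,t]` by adding a uniform grid on `[s,t]`. -/
private noncomputable def IntervalPartition.extend {S s : ℝ} (P : IntervalPartition S s) {t : ℝ}
    (hst : s < t) {M : ℕ} (hM : 0 < M) : IntervalPartition S t where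
  N := P.N + M
  pts := extPts P t M
  hN := Nat.lt_of_lt_of_le P.hN (Nat.le_add_right _ _)
  first := by rw [extPts_of_le P t M (Nat.zero_le _), P.first]
  last := by
    rw [extPts_add]
    have hM' : (M:ℝ) ≠ 0 := Nat.cast_ne_zero.2 hM.ne'
    field_simp
    ring
  mono := by
    intro i hi
    have hh : 0 < (t - s) / M := div_pos (sub_pos.2 hst) (Nat.cast_pos.2 hM)
    rcases lt_or_ge i P.N with h | h
    · rw [extPts_of_le P t M h.le, extPts_of_le P t M h]
      exact P.mono i h
    · obtain ⟨j, rfl⟩ := Nat.exists_eq_add_of_le h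
      rw [show P.N + j + 1 = P.N + (j + 1) from rfl, extPts_add, extPts_add]
      push_cast
      nlinarith [hh]

private lemma IntervalPartition.extend_diamLE {S s t ε : ℝ} (P : IntervalPartition S s) (hst : s < t)
    {M : ℕ} (hM : 0 < M) (hP : P.diamLE ε) (hMε : (t - s) / M ≤ ε) :
    (P.extend hst hM).diamLE ε := by
  intro i hi
  show extPts P t M (i + 1) - extPts P t M i ≤ ε
  rcases lt_or_ge i P.N with h | h
  · rw [extPts_of_le P t M h.le, extPts_of_le P t M h]
    exact hP i h
  · obtain ⟨j, rfl⟩ := Nat.exists_eq_add_of_le h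
    rw [show P.N + j + 1 = P.N + (j + 1) from rfl, extPts_add, extPts_add]
    push_cast
    nlinarith [hMε]

private lemma mvSum_extend {n k : ℕ} (F : ℝ → En n → En k → Set (En n)) (xbar : ℝ → En n)
    (A : Set (En k)) (δb : ℝ) {S s t : ℝ} (P : IntervalPartition S s) (hst : s < t) {M : ℕ}
    (hM : 0 < M) :
    mvSum F xbar A δb (P.extend hst hM) = mvSum F xbar A δb P +
      ∑ j ∈ Finset.range M,
        mvTerm F xbar A δb (s + j * ((t - s) / M)) (s + ((j : ℝ) + 1) * ((t - s) / M)) := by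
  rw [mvSum_repr, mvSum_repr]
  show (∑ i ∈ Finset.range (P.N + M),
      mvTerm F xbar A δb (extPts P t M i) (extPts P t M (i + 1))) = _
  rw [Finset.sum_range_add]
  congr 1
  · exact Finset.sum_congr rfl fun i hi => by
      rw [Finset.mem_range] at hi
      rw [extPts_of_le P t M hi.le, extPts_of_le P t M hi]
  · refine Finset.sum_congr rfl fun j _ => ?_
    rw [show P.N + j + 1 = P.N + (j + 1) from rfl, extPts_add, extPts_add]
    push_cast
    ring_nf
private lemma etaEps_add {n k : ℕ} (F : ℝ → En n → En k → Set (En n)) (xbar : ℝ → En n)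
    (A : Set (En k)) (δb : ℝ) {S s t ε : ℝ} (hε : 0 < ε) (hSs : S < s) (hst : s < t)
    {x : En n} {a : En k} (ha : a ∈ A)
    (htube : ∀ r ∈ Set.Icc s t, dist x (xbar r) ≤ δb) :
    EMetric.hausdorffEdist (F t x a) (F s x a) + mvEtaEps F xbar A δb ε S s ≤
      mvEtaEps F xbar A δb ε S t := by
  obtain ⟨M, hM, hMε⟩ := exists_nat_div_le (sub_pos.2 hst) hε
  have hMr : (0:ℝ) < M := Nat.cast_pos.2 hM
  have hh₀pos : 0 < (t - s) / M := div_pos (sub_pos.2 hst) hMr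
  have hMh : (M:ℝ) * ((t - s) / M) = t - s := by field_simp
  have hq : ∀ j : ℕ, j ≤ M → s + j * ((t - s) / M) ∈ Set.Icc s t := by
    intro j hj
    have h1 : (j:ℝ) ≤ M := Nat.cast_le.2 hj
    have h2 : (j:ℝ) * ((t - s) / M) ≤ M * ((t - s) / M) :=
      mul_le_mul_of_nonneg_right h1 hh₀pos.le
    constructor
    · nlinarith [Nat.cast_nonneg (α := ℝ) j, hh₀pos]
    · linarith
  have key : ∀ P : IntervalPartition S s, P.diamLE ε →
      EMetric.hausdorffEdist (F t x a) (F s x a) + mvSum F xbar A δb P ≤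
        mvEtaEps F xbar A δb ε S t := by
    intro P hP
    have hchain : EMetric.hausdorffEdist (F t x a) (F s x a) ≤
        ∑ j ∈ Finset.range M,
          mvTerm F xbar A δb (s + j * ((t - s) / M)) (s + ((j : ℝ) + 1) * ((t - s) / M)) := by
      have h1 := hausdorffEdist_chain (fun j : ℕ => F (s + j * ((t - s) / M)) x a) M
      simp only [Nat.cast_zero, zero_mul, add_zero] at h1
      have hqM : s + (M:ℝ) * ((t - s) / M) = t := by rw [hMh]; ring
      rw [hqM] at h1
      refine h1.trans (Finset.sum_le_sum fun j hj => ?_)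
      rw [Finset.mem_range] at hj
      have hj1 : s + (j:ℝ) * ((t - s) / M) ∈ Set.Icc s t := hq j hj.le
      have hle : s + (j:ℝ) * ((t - s) / M) ≤ s + ((j:ℝ) + 1) * ((t - s) / M) := by
        nlinarith [hh₀pos]
      have := le_mvTerm F xbar A δb hle (htube _ hj1) ha
      refine le_trans (le_of_eq ?_) this
      push_cast
      ring_nf
    calc EMetric.hausdorffEdist (F t x a) (F s x a) + mvSum F xbar A δb P
        ≤ (∑ j ∈ Finset.range M,
            mvTerm F xbar A δb (s + j * ((t - s) / M)) (s + ((j : ℝ) + 1) * ((t - s) / M)))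
            + mvSum F xbar A δb P := add_le_add hchain le_rfl
      _ = mvSum F xbar A δb (P.extend hst hM) := by rw [mvSum_extend]; ring
      _ ≤ mvEtaEps F xbar A δb ε S t :=
          le_iSup₂ (f := fun (Q : IntervalPartition S t) (_ : Q.diamLE ε) => mvSum F xbar A δb Q)
            (P.extend hst hM) (P.extend_diamLE hst hM hP hMε)
  have hrepr : mvEtaEps F xbar A δb ε S s =
      ⨆ (P : IntervalPartition S s) (_ : P.diamLE ε), mvSum F xbar A δb P := rfl
  rw [hrepr, ENNReal.add_biSup' (partition_exists hSs hε)]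
  exact iSup₂_le key

private lemma etaEps_mono {n k : ℕ} (F : ℝ → En n → En k → Set (En n)) (xbar : ℝ → En n)
    (A : Set (En k)) (δb : ℝ) {S s t ε : ℝ} (hε : 0 < ε) (hst : s ≤ t) :
    mvEtaEps F xbar A δb ε S s ≤ mvEtaEps F xbar A δb ε S t := by
  rcases eq_or_lt_of_le hst with rfl | hst'
  · exact le_rfl
  · refine iSup₂_le fun P hP => ?_
    obtain ⟨M, hM, hMε⟩ := exists_nat_div_le (sub_pos.2 hst') hε
    calc mvSum F xbar A δb P ≤ mvSum F xbar A δb (P.extend hst' hM) := by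
          rw [mvSum_extend]; exact le_self_add
      _ ≤ mvEtaEps F xbar A δb ε S t :=
          le_iSup₂ (f := fun (Q : IntervalPartition S t) (_ : Q.diamLE ε) => mvSum F xbar A δb Q)
            (P.extend hst' hM) (P.extend_diamLE hst' hM hP hMε)

private lemma etaDelta_mono {n k : ℕ} (F : ℝ → En n → En k → Set (En n)) (xbar : ℝ → En n)
    (A : Set (En k)) (δb : ℝ) {S s t : ℝ} (hst : s ≤ t) :
    mvEtaDelta F xbar A δb S s ≤ mvEtaDelta F xbar A δb S t :=
  le_iInf fun ε => le_iInf fun hε =>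
    iInf₂_le_of_le ε hε (etaEps_mono F xbar A δb hε hst)

private lemma key_ineq {n k : ℕ} (F : ℝ → En n → En k → Set (En n)) (xbar : ℝ → En n)
    (A : Set (En k)) (δb : ℝ) {S s t : ℝ} (hSs : S < s) (hst : s < t) {x : En n} {a : En k}
    (ha : a ∈ A) (htube : ∀ r ∈ Set.Icc s t, dist x (xbar r) ≤ δb) :
    EMetric.hausdorffEdist (F t x a) (F s x a) + mvEtaDelta F xbar A δb S s ≤
      mvEtaDelta F xbar A δb S t :=
  le_iInf fun ε => le_iInf fun hε =>
    le_trans (add_le_add le_rfl (iInf₂_le ε hε)) (etaEps_add F xbar A δb hε hSs hst ha htube)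

private lemma klim_of_cauchy {α : Type*} [PseudoEMetricSpace α] {l : Filter ℝ} [l.NeBot]
    {G : ℝ → Set α}
    (h : ∀ ε : ℝ≥0∞, 0 < ε → ∃ U ∈ l, ∀ s ∈ U, ∀ t ∈ U,
      EMetric.hausdorffEdist (G s) (G t) ≤ ε) :
    KLimExists l G := by
  apply Set.eq_of_subset_of_subset
  · intro v hv
    show Tendsto (fun s => EMetric.infEdist v (G s)) l (𝓝 0)
    rw [ENNReal.tendsto_nhds_zero]
    intro ε hε
    have hε2 : 0 < ε / 2 := ENNReal.half_pos hε.ne'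
    obtain ⟨U, hUl, hU⟩ := h (ε / 2) hε2
    obtain ⟨s₀, hs₀1, hs₀2⟩ :=
      ((hv (ε / 2) hε2).and_eventually (Filter.eventually_of_mem hUl fun _ hs => hs)).exists
    refine Filter.eventually_of_mem hUl fun t htU => ?_
    calc EMetric.infEdist v (G t)
        ≤ EMetric.infEdist v (G s₀) + EMetric.hausdorffEdist (G s₀) (G t) :=
          EMetric.infEdist_le_infEdist_add_hausdorffEdist
      _ ≤ ε / 2 + ε / 2 := add_le_add hs₀1.le (hU s₀ hs₀2 t htU)
      _ = ε := ENNReal.add_halves ε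
  · intro v hv
    have hv' : Tendsto (fun s => EMetric.infEdist v (G s)) l (𝓝 0) := hv
    intro ε hε
    exact (hv'.eventually_lt_const hε).frequently
/-- Under bounded variation along `x̄` uniformly over `A`,
`η^δ̄(T) < ∞`, (C1) and (C2), for every `δ ∈ (0,δ̄)` the set-valued one-sided limits
`F(s̄⁺,x,a)` (for `s̄ ∈ [S,T)`, `x ∈ x̄(s̄)+δ𝔹`, `a ∈ A`) and `F(t̄⁻,y,a)`
(for `t̄ ∈ (S,T]`, `y ∈ x̄(t̄)+δ𝔹`, `a ∈ A`) exist: the Kuratowski upper and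
lower limits coincide. -/
theorem statement1 {n k : ℕ} (F : ℝ → En n → En k → Set (En n))
    (xbar : ℝ → En n) (A : Set (En k)) (S T : ℝ) (hST : S < T)
    (hA : IsCompact A) (hx : ContinuousOn xbar (Set.Icc S T))
    (hBV : HasBVAlongUniformly F xbar A S T)
    (δbar : ℝ) (hδbar : 0 < δbar) (hfin : mvEtaDelta F xbar A δbar S T < ⊤)
    (hC1 : HypC1 F xbar A S T δbar) (hC2 : HypC2 F xbar A S T δbar)
    (δ : ℝ) (hδ : δ ∈ Set.Ioo 0 δbar) :
    (∀ sbar ∈ Set.Ico S T, ∀ x ∈ Metric.closedBall (xbar sbar) δ, ∀ a ∈ A,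
        KLimExists (𝓝[Set.Ioc sbar T] sbar) fun s => F s x a) ∧
    (∀ tbar ∈ Set.Ioc S T, ∀ y ∈ Metric.closedBall (xbar tbar) δ, ∀ a ∈ A,
        KLimExists (𝓝[Set.Ico S tbar] tbar) fun t => F t y a) := by
  obtain ⟨hδ0, hδδb⟩ := hδ
  set m : ℝ → ℝ≥0∞ := fun r => mvEtaDelta F xbar A δbar S r with hm
  have hmono : ∀ {p q : ℝ}, p ≤ q → m p ≤ m q := fun hpq => etaDelta_mono F xbar A δbar hpq
  have hmfin : ∀ {p : ℝ}, p ≤ T → m p ≠ ⊤ := fun hpT => ((hmono hpT).trans_lt hfin).ne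
  constructor
  · -- right limits
    rintro sbar ⟨hSsb, hsbT⟩ x hxball a haA
    have hcont : ContinuousWithinAt xbar (Set.Icc S T) sbar := hx sbar ⟨hSsb, hsbT.le⟩
    obtain ⟨ρ, hρ, hball⟩ := Metric.continuousWithinAt_iff.1 hcont (δbar - δ) (by linarith)
    have htube : ∀ r, S ≤ r → r ≤ T → dist r sbar < ρ → dist x (xbar r) ≤ δbar := by
      intro r h1 h2 h3
      have h4 := hball ⟨h1, h2⟩ h3
      have h5 : dist x (xbar sbar) ≤ δ := Metric.mem_closedBall.1 hxball
      calc dist x (xbar r) ≤ dist x (xbar sbar) + dist (xbar sbar) (xbar r) :=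
            dist_triangle _ _ _
        _ ≤ δ + (δbar - δ) := by
            rw [dist_comm (xbar sbar)]; exact add_le_add h5 h4.le
        _ = δbar := by ring
    rw [show (𝓝[Set.Ioc sbar T] sbar) = 𝓝[>] sbar from nhdsWithin_Ioc_eq_nhdsGT hsbT]
    apply klim_of_cauchy
    intro ε' hε'
    set u₀ : ℝ := min (sbar + ρ / 2) T with hu₀
    have hu₀1 : sbar < u₀ := lt_min (by linarith) hsbT
    have hu₀T : u₀ ≤ T := min_le_right _ _
    have hu₀ρ : u₀ ≤ sbar + ρ / 2 := min_le_left _ _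
    set L : ℝ≥0∞ := ⨅ r ∈ Set.Ioc sbar u₀, m r with hL
    have hLfin : L ≠ ⊤ :=
      ((iInf₂_le u₀ ⟨hu₀1, le_rfl⟩).trans_lt (lt_of_le_of_ne le_top (hmfin hu₀T))).ne
    have hLlt : L < L + ε' := ENNReal.lt_add_right hLfin hε'.ne'
    obtain ⟨s₁, hs₁mem, hs₁⟩ : ∃ s₁ ∈ Set.Ioc sbar u₀, m s₁ < L + ε' := by
      by_contra hcon
      push_neg at hcon
      exact absurd (le_iInf₂ hcon) (not_le.2 hLlt)
    refine ⟨Set.Ioc sbar s₁, Ioc_mem_nhdsGT_of_mem ⟨le_rfl, hs₁mem.1⟩, ?_⟩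
    have key : ∀ p ∈ Set.Ioc sbar s₁, ∀ q ∈ Set.Ioc sbar s₁, p < q →
        EMetric.hausdorffEdist (F q x a) (F p x a) ≤ ε' := by
      intro p hp q hq hpq
      have hqu₀ : q ≤ u₀ := hq.2.trans hs₁mem.2
      have hpu₀ : p ≤ u₀ := hp.2.trans hs₁mem.2
      have htube' : ∀ r ∈ Set.Icc p q, dist x (xbar r) ≤ δbar := by
        intro r hr
        have h1 : sbar < r := hp.1.trans_le hr.1
        have h2 : r ≤ u₀ := hr.2.trans hqu₀
        refine htube r (hSsb.trans h1.le) (h2.trans hu₀T) ?_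
        rw [Real.dist_eq, abs_of_pos (by linarith)]
        linarith
      have hkey := key_ineq F xbar A δbar (hSsb.trans_lt hp.1) hpq haA htube'
      have h3 : EMetric.hausdorffEdist (F q x a) (F p x a) + m p ≤ ε' + m p :=
        calc EMetric.hausdorffEdist (F q x a) (F p x a) + m p ≤ m q := hkey
          _ ≤ m s₁ := hmono hq.2
          _ ≤ L + ε' := hs₁.le
          _ ≤ ε' + m p := by rw [add_comm]; exact add_le_add le_rfl (iInf₂_le p ⟨hp.1, hpu₀⟩)
      exact (ENNReal.add_le_add_iff_right (hmfin (hpu₀.trans hu₀T))).1 h3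
    intro p hp q hq
    rcases lt_trichotomy p q with h | h | h
    · exact EMetric.hausdorffEdist_comm.trans_le (key p hp q hq h)
    · rw [h]; exact (le_of_eq EMetric.hausdorffEdist_self).trans zero_le
    · exact key q hq p hp h
  · -- left limits
    rintro tbar ⟨hStb, htbT⟩ y hyball a haA
    have hcont : ContinuousWithinAt xbar (Set.Icc S T) tbar := hx tbar ⟨hStb.le, htbT⟩
    obtain ⟨ρ, hρ, hball⟩ := Metric.continuousWithinAt_iff.1 hcont (δbar - δ) (by linarith)
    have htube : ∀ r, S ≤ r → r ≤ T → dist r tbar < ρ → dist y (xbar r) ≤ δbar := by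
      intro r h1 h2 h3
      have h4 := hball ⟨h1, h2⟩ h3
      have h5 : dist y (xbar tbar) ≤ δ := Metric.mem_closedBall.1 hyball
      calc dist y (xbar r) ≤ dist y (xbar tbar) + dist (xbar tbar) (xbar r) :=
            dist_triangle _ _ _
        _ ≤ δ + (δbar - δ) := by
            rw [dist_comm (xbar tbar)]; exact add_le_add h5 h4.le
        _ = δbar := by ring
    rw [show (𝓝[Set.Ico S tbar] tbar) = 𝓝[<] tbar from nhdsWithin_Ico_eq_nhdsLT hStb]
    apply klim_of_cauchy
    intro ε' hε'
    set u₀ : ℝ := max (tbar - ρ / 2) ((S + tbar) / 2) with hu₀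
    have hu₀1 : u₀ < tbar := max_lt (by linarith) (by linarith)
    have hSu₀ : S < u₀ := lt_of_lt_of_le (by linarith) (le_max_right _ _)
    have hu₀ρ : tbar - ρ / 2 ≤ u₀ := le_max_left _ _
    have htube₀ : ∀ p q, u₀ ≤ p → q < tbar → ∀ r ∈ Set.Icc p q, dist y (xbar r) ≤ δbar := by
      intro p q h1 h2 r hr
      have h3 : u₀ ≤ r := h1.trans hr.1
      have h4 : r < tbar := lt_of_le_of_lt hr.2 h2
      refine htube r ((hSu₀.trans_le h3).le) (h4.le.trans htbT) ?_
      rw [Real.dist_eq, abs_of_nonpos (by linarith)]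
      linarith
    rcases eq_top_or_lt_top ε' with rfl | hε'top
    · exact ⟨Set.Ico u₀ tbar, Ico_mem_nhdsLT_of_mem ⟨hu₀1, le_rfl⟩,
        fun _ _ _ _ => le_top⟩
    set L : ℝ≥0∞ := ⨆ r ∈ Set.Ico u₀ tbar, m r with hL
    have hLfin : L ≠ ⊤ := by
      refine ((iSup₂_le fun r hr => hmono (hr.2.le.trans htbT)).trans_lt
        (lt_of_le_of_ne le_top (hmfin le_rfl))).ne
    obtain ⟨s₁, hs₁mem, hs₁⟩ : ∃ s₁ ∈ Set.Ico u₀ tbar, L < m s₁ + ε' := by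
      by_contra hcon
      push_neg at hcon
      have h0 : ε' ≤ L := le_trans le_add_self (hcon u₀ ⟨le_rfl, hu₀1⟩)
      have hL0 : L ≠ 0 := fun h => by simp [h] at h0; exact hε'.ne' h0
      have h1 : L ≤ L - ε' :=
        iSup₂_le fun r hr => ENNReal.le_sub_of_add_le_right hε'top.ne (hcon r hr)
      exact absurd h1 (not_le.2 (ENNReal.sub_lt_self hLfin hL0 hε'.ne'))
    refine ⟨Set.Ico s₁ tbar, Ico_mem_nhdsLT_of_mem ⟨hs₁mem.2, le_rfl⟩, ?_⟩
    have key : ∀ p ∈ Set.Ico s₁ tbar, ∀ q ∈ Set.Ico s₁ tbar, p < q →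
        EMetric.hausdorffEdist (F q y a) (F p y a) ≤ ε' := by
      intro p hp q hq hpq
      have hu₀p : u₀ ≤ p := hs₁mem.1.trans hp.1
      have htube' : ∀ r ∈ Set.Icc p q, dist y (xbar r) ≤ δbar := htube₀ p q hu₀p hq.2
      have hSp : S < p := hSu₀.trans_le hu₀p
      have hkey := key_ineq F xbar A δbar hSp hpq haA htube'
      have h3 : EMetric.hausdorffEdist (F q y a) (F p y a) + m p ≤ ε' + m p :=
        calc EMetric.hausdorffEdist (F q y a) (F p y a) + m p ≤ m q := hkey
          _ ≤ L := le_iSup₂ (f := fun r (_ : r ∈ Set.Ico u₀ tbar) => m r) q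
              ⟨hu₀p.trans hpq.le, hq.2⟩
          _ ≤ m s₁ + ε' := hs₁.le
          _ ≤ ε' + m p := by rw [add_comm]; exact add_le_add le_rfl (hmono hp.1)
      exact (ENNReal.add_le_add_iff_right (hmfin (hp.2.le.trans htbT))).1 h3
    intro p hp q hq
    rcases lt_trichotomy p q with h | h | h
    · exact EMetric.hausdorffEdist_comm.trans_le (key p hp q hq h)
    · rw [h]; exact (le_of_eq EMetric.hausdorffEdist_self).trans zero_le
    · exact key q hq p hp h

end
end

section
/- Let f(t,x) = t·x on [0,1] × ℝ and x̄(t) = t on [0,1]. Then: (i) the simple cumulative variation function η_simple(t) := sup{ Σ_{i=0}^{N−1} sup_{x∈[0,1]} |f(t_{i+1},x) − f(t_i,x)| : {t_i} a partition of [0,t] } equals t for all t ∈ [0,1]; (ii) the cumulative variation function η of f(·,x) along x̄ equals t²/2 for all t ∈ [0,1]; and consequently, for every nontrivial subinterval [s,t] ⊂ [0,1] with s < t, (η_simple(t) − η_simple(s)) − (η(t) − η(s)) = (t−s)(1 − (t+s)/2) > 0. -/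
open Set Metric Filter MeasureTheory Pointwise
open scoped ENNReal Topology

noncomputable section

/-- A partition `{t₀ = S, t₁, …, t_N = t}` of the interval `[S, t]`. -/
structure TPartition (S t : ℝ) where
  N : ℕ
  pts : ℕ → ℝ
  hN : 0 < N
  first : pts 0 = S
  last : pts N = t
  mono : ∀ i, i < N → pts i < pts (i + 1)

/-- `diam(𝒯) ≤ ε` : every subinterval of the partition has length at most `ε`. -/
def TPartition.diamLE {S t : ℝ} (P : TPartition S t) (ε : ℝ) : Prop :=
  ∀ i, i < P.N → P.pts (i + 1) - P.pts i ≤ ε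

/-- The sum `I^δ(𝒯) = Σᵢ sup { |m(tᵢ₊₁,x) − m(tᵢ,x)| : x ∈ x̄([tᵢ,tᵢ₊₁]) + δ𝔹 }`
for a function `m` along `x̄` (distances measured by `edist` in the target). -/
noncomputable def fSum {E α : Type*} [NormedAddCommGroup E] [PseudoEMetricSpace α]
    (m : ℝ → E → α) (xbar : ℝ → E) (δ : ℝ) {S t : ℝ} (P : TPartition S t) : ℝ≥0∞ :=
  ∑ i ∈ Finset.range P.N,
    ⨆ x ∈ xbar '' Set.Icc (P.pts i) (P.pts (i + 1)) + Metric.closedBall (0 : E) δ,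
      edist (m (P.pts (i + 1)) x) (m (P.pts i) x)

/-- The `(δ,ε)`-perturbed cumulative variation function `η^δ_ε(t)` of `m(·,x)` along
`x̄`: the supremum of `I^δ(𝒯)` over partitions `𝒯` of `[S,t]` with `diam(𝒯) ≤ ε`. -/
noncomputable def fEtaEps {E α : Type*} [NormedAddCommGroup E] [PseudoEMetricSpace α]
    (m : ℝ → E → α) (xbar : ℝ → E) (δ ε : ℝ) (S t : ℝ) : ℝ≥0∞ :=
  ⨆ (P : TPartition S t) (_ : P.diamLE ε), fSum m xbar δ P

/-- The `δ`-perturbed cumulative variation function `η^δ(t) = lim_{ε↓0} η^δ_ε(t)`. -/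
noncomputable def fEtaDelta {E α : Type*} [NormedAddCommGroup E] [PseudoEMetricSpace α]
    (m : ℝ → E → α) (xbar : ℝ → E) (δ : ℝ) (S t : ℝ) : ℝ≥0∞ :=
  ⨅ (ε : ℝ) (_ : 0 < ε), fEtaEps m xbar δ ε S t

/-- The cumulative variation function `η(t) = lim_{δ↓0} η^δ(t)` of `m(·,x)` along `x̄`. -/
noncomputable def fEta {E α : Type*} [NormedAddCommGroup E] [PseudoEMetricSpace α]
    (m : ℝ → E → α) (xbar : ℝ → E) (S t : ℝ) : ℝ≥0∞ :=
  ⨅ (δ : ℝ) (_ : 0 < δ), fEtaDelta m xbar δ S t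

/-- `m(·,x)` has bounded variation along `x̄` on `[S,T]` : `η(T) < ∞`. -/
def FunHasBVAlong {E α : Type*} [NormedAddCommGroup E] [PseudoEMetricSpace α]
    (m : ℝ → E → α) (xbar : ℝ → E) (S T : ℝ) : Prop :=
  fEta m xbar S T < ⊤

/-- Hypothesis (BV1): `x̄` is continuous and, for some `δ' > 0`, `m(t,·)` is
continuously differentiable on the interior of `x̄(t) + δ'𝔹` for all `t ∈ [S,T]`. -/
def HypBV1 {n r : ℕ} (m : ℝ → En n → En r) (xbar : ℝ → En n) (S T δ' : ℝ) : Prop :=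
  ContinuousOn xbar (Set.Icc S T) ∧ 0 < δ' ∧
    ∀ t ∈ Set.Icc S T, ContDiffOn ℝ 1 (m t) (Metric.ball (xbar t) δ')

/-- Hypothesis (BV2): both `m(·,x)` and `∇ₓm(·,x)` have bounded variation along `x̄`. -/
def HypBV2 {n r : ℕ} (m : ℝ → En n → En r) (xbar : ℝ → En n) (S T : ℝ) : Prop :=
  FunHasBVAlong m xbar S T ∧
    FunHasBVAlong (fun t x => fderiv ℝ (m t) x) xbar S T

/-- The pairing `∫ g·dμʲ = Σᵢ ⟨g(tᵢ), m(tᵢ₊₁,ξᵢ) − m(tᵢ,ξᵢ)⟩` of a continuous function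
`g` with the discrete `ℝʳ`-valued measure `μʲ = Σᵢ [m(tᵢ₊₁,ξᵢ) − m(tᵢ,ξᵢ)] δ_{tᵢ}`. -/
noncomputable def discretePairing {n r : ℕ} (m : ℝ → En n → En r) {S T : ℝ}
    (P : TPartition S T) (ξ : ℕ → En n) (g : ℝ → En r) : ℝ :=
  ∑ i ∈ Finset.range P.N, ∑ l : Fin r,
    g (P.pts i) l * (m (P.pts (i + 1)) (ξ i) l - m (P.pts i) (ξ i) l)

/-- The integral `∫ f dμ` of a real function against a signed Borel measure,
via the Jordan decomposition. -/
noncomputable def signedIntegral (μ : MeasureTheory.SignedMeasure ℝ) (f : ℝ → ℝ) : ℝ :=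
  (∫ t, f t ∂μ.toJordanDecomposition.posPart) -
    ∫ t, f t ∂μ.toJordanDecomposition.negPart

/-- The pairing `∫ g·dμ = Σ_l ∫ g_l dμ_l` of a continuous function with an
`ℝʳ`-valued Borel measure `μ` (given through its `r` signed components). -/
noncomputable def signedPairing {r : ℕ} (μ : Fin r → MeasureTheory.SignedMeasure ℝ)
    (g : ℝ → En r) : ℝ :=
  ∑ l : Fin r, signedIntegral (μ l) fun t => g t l

/-- `μ` (an `ℝʳ`-valued Borel measure on `[S,T]`, given through its signed components)
is the partial variation measure `B ↦ ∫_B d_t m(t,x̄(t))` of `m(·,x)` along `x̄`: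
it is supported on `[S,T]` and is the weak* limit of the discrete measures
`μʲ = Σᵢ [m(tʲᵢ₊₁,ξʲᵢ) − m(tʲᵢ,ξʲᵢ)] δ_{tʲᵢ}`, for every sequence of partitions of
`[S,T]` with diameters tending to `0` and points `ξʲᵢ = x̄(t)`, `t ∈ [tʲᵢ,tʲᵢ₊₁]`. -/
def IsPartialVariationMeasure {n r : ℕ} (m : ℝ → En n → En r) (xbar : ℝ → En n)
    (S T : ℝ) (μ : Fin r → MeasureTheory.SignedMeasure ℝ) : Prop :=
  (∀ l, (μ l).restrict (Set.Icc S T)ᶜ = 0) ∧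
  ∀ (P : ℕ → TPartition S T) (ξ : ℕ → ℕ → En n),
    (∀ ε : ℝ, 0 < ε → ∃ J : ℕ, ∀ j ≥ J, (P j).diamLE ε) →
    (∀ j i, i < (P j).N →
      ∃ t ∈ Set.Icc ((P j).pts i) ((P j).pts (i + 1)), ξ j i = xbar t) →
    ∀ g : ℝ → En r, Continuous g →
      Tendsto (fun j => discretePairing m (P j) (ξ j) g) atTop (𝓝 (signedPairing μ g))


/-- The simple cumulative variation function of `f(t,x) = t·x` with `X = [0,1]`:
`η_simple(t) = sup { Σᵢ sup_{x∈[0,1]} |f(tᵢ₊₁,x) − f(tᵢ,x)| : {tᵢ} a partition of [0,t] }`. -/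
noncomputable def etaSimple (t : ℝ) : ℝ≥0∞ :=
  ⨆ P : TPartition 0 t, ∑ i ∈ Finset.range P.N,
    ⨆ x ∈ Set.Icc (0 : ℝ) 1, edist (P.pts (i + 1) * x) (P.pts i * x)


namespace TPartition

lemma pts_mono {S t : ℝ} (P : TPartition S t) {i j : ℕ} (hij : i ≤ j) (hj : j ≤ P.N) :
    P.pts i ≤ P.pts j := by
  induction j with
  | zero => simp_all
  | succ k ih =>
    rcases Nat.eq_or_lt_of_le hij with rfl | h
    · exact le_rfl
    · exact le_trans (ih (Nat.lt_succ_iff.1 h) (le_trans (Nat.le_succ k) hj))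
        (le_of_lt (P.mono k (Nat.lt_of_succ_le hj)))

lemma pts_nonneg {t : ℝ} (P : TPartition 0 t) {i : ℕ} (hi : i ≤ P.N) : 0 ≤ P.pts i := by
  have h := P.pts_mono (Nat.zero_le i) hi
  rwa [P.first] at h

lemma isEmpty_partition_self : IsEmpty (TPartition 0 0) := by
  constructor
  intro P
  have h3 := P.pts_mono (Nat.succ_le_of_lt P.hN) le_rfl
  have h2 := P.mono 0 P.hN
  rw [P.first] at h2
  rw [P.last] at h3
  linarith

end TPartition

lemma exists_partition_diamLE {t ε : ℝ} (ht : 0 < t) (hε : 0 < ε) :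
    ∃ P : TPartition 0 t, P.diamLE ε := by
  set N : ℕ := ⌈t / ε⌉₊ with hNdef
  have hN : 0 < N := Nat.ceil_pos.2 (div_pos ht hε)
  have hNR : (0:ℝ) < N := Nat.cast_pos.2 hN
  have hle : t / ε ≤ N := Nat.le_ceil _
  have hstep : t / N ≤ ε := by
    rw [div_le_iff₀ hNR]
    calc t = (t/ε) * ε := by field_simp
    _ ≤ N * ε := by nlinarith
    _ = ε * N := by ring
  refine ⟨⟨N, fun i => min ((i:ℝ) * (t / N)) t, hN, by simp [ht.le], ?_, ?_⟩, ?_⟩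
  · show min ((N:ℝ) * (t / N)) t = t
    have h : (N:ℝ) * (t / N) = t := by field_simp
    rw [h, min_self]
  · intro i hi
    have h1 : (i:ℝ) * (t/N) < ((i:ℝ)+1) * (t/N) := by
      have : 0 < t / N := div_pos ht hNR
      nlinarith
    have h2 : ((i:ℝ)+1) * (t/N) ≤ t := by
      have h3 : ((i:ℝ)+1) ≤ N := by exact_mod_cast Nat.succ_le_of_lt hi
      calc ((i:ℝ)+1) * (t/N) ≤ (N:ℝ) * (t/N) := by
            apply mul_le_mul_of_nonneg_right h3 (le_of_lt (div_pos ht hNR))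
        _ = t := by field_simp
    simp only [Nat.cast_add, Nat.cast_one]
    rw [min_eq_left (le_trans (le_of_lt h1) h2), min_eq_left h2]
    exact h1
  · intro i hi
    have h2 : ((i:ℝ)+1) * (t/N) ≤ t := by
      have h3 : ((i:ℝ)+1) ≤ N := by exact_mod_cast Nat.succ_le_of_lt hi
      calc ((i:ℝ)+1) * (t/N) ≤ (N:ℝ) * (t/N) := by
            apply mul_le_mul_of_nonneg_right h3 (le_of_lt (div_pos ht hNR))
        _ = t := by field_simp
    simp only [Nat.cast_add, Nat.cast_one]
    rw [min_eq_left (by nlinarith [div_pos ht hNR] : (i:ℝ) * (t/N) ≤ t), min_eq_left h2]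
    linarith [hstep]

lemma supA {a b : ℝ} (hab : a ≤ b) :
    ⨆ x ∈ Set.Icc (0:ℝ) 1, edist (b*x) (a*x) = ENNReal.ofReal (b - a) := by
  apply le_antisymm
  · refine iSup₂_le fun x hx => ?_
    rw [edist_dist, Real.dist_eq]
    apply ENNReal.ofReal_le_ofReal
    have h : b*x - a*x = (b-a)*x := by ring
    rw [h, abs_mul, abs_of_nonneg (sub_nonneg.2 hab), abs_of_nonneg hx.1]
    nlinarith [hx.2, sub_nonneg.2 hab]
  · have h1 : (1:ℝ) ∈ Set.Icc (0:ℝ) 1 := ⟨zero_le_one, le_refl 1⟩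
    refine le_trans ?_ (le_iSup₂ (f := fun x _ => edist (b*x) (a*x)) 1 h1)
    rw [mul_one, mul_one, edist_dist, Real.dist_eq, abs_of_nonneg (sub_nonneg.2 hab)]

lemma supC {a b δ : ℝ} (ha : 0 ≤ a) (hab : a ≤ b) (hδ : 0 ≤ δ) :
    (⨆ x ∈ (fun s : ℝ => s) '' Set.Icc a b + Metric.closedBall (0:ℝ) δ,
      edist (b*x) (a*x)) = ENNReal.ofReal ((b-a)*(b+δ)) := by
  have hset : (fun s : ℝ => s) '' Set.Icc a b + Metric.closedBall (0:ℝ) δ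
      = Set.Icc (a - δ) (b + δ) := by
    rw [Set.image_id', Real.closedBall_eq_Icc, zero_sub, zero_add,
      Set.Icc_add_Icc hab (neg_le_self hδ)]
    ring_nf
  rw [hset]
  apply le_antisymm
  · refine iSup₂_le fun x hx => ?_
    rw [edist_dist, Real.dist_eq]
    apply ENNReal.ofReal_le_ofReal
    have h : b*x - a*x = (b-a)*x := by ring
    have hxa : |x| ≤ b + δ := abs_le.2 ⟨by linarith [hx.1], hx.2⟩
    rw [h, abs_mul, abs_of_nonneg (sub_nonneg.2 hab)]
    nlinarith [sub_nonneg.2 hab]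
  · have h1 : b + δ ∈ Set.Icc (a - δ) (b + δ) := ⟨by linarith, le_refl _⟩
    refine le_trans ?_ (le_iSup₂ (f := fun x _ => edist (b*x) (a*x)) (b+δ) h1)
    rw [edist_dist, Real.dist_eq]
    apply ENNReal.ofReal_le_ofReal
    have h : b*(b+δ) - a*(b+δ) = (b-a)*(b+δ) := by ring
    rw [h, le_abs]
    left; exact le_refl _

lemma fSum_eq {t δ : ℝ} (hδ : 0 ≤ δ) (P : TPartition 0 t) :
    fSum (fun t x => t * x) (fun s : ℝ => s) δ P =
      ENNReal.ofReal (∑ i ∈ Finset.range P.N,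
        (P.pts (i+1) - P.pts i) * (P.pts (i+1) + δ)) := by
  unfold fSum
  rw [ENNReal.ofReal_sum_of_nonneg]
  · refine Finset.sum_congr rfl fun i hi => ?_
    exact supC (P.pts_nonneg (le_of_lt (Finset.mem_range.1 hi)))
      (le_of_lt (P.mono i (Finset.mem_range.1 hi))) hδ
  · intro i hi
    have h1 := P.mono i (Finset.mem_range.1 hi)
    have h0 := P.pts_nonneg (i := i) (le_of_lt (Finset.mem_range.1 hi))
    nlinarith

lemma sum_ge {t δ : ℝ} (P : TPartition 0 t) :
    t^2/2 + δ*t ≤ ∑ i ∈ Finset.range P.N, (P.pts (i+1) - P.pts i) * (P.pts (i+1) + δ) := by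
  have h : ∀ i ∈ Finset.range P.N,
      ((fun j => P.pts j^2/2 + δ * P.pts j) (i+1) - (fun j => P.pts j^2/2 + δ * P.pts j) i)
        ≤ (P.pts (i+1) - P.pts i) * (P.pts (i+1) + δ) := by
    intro i hi
    have h1 := le_of_lt (P.mono i (Finset.mem_range.1 hi))
    simp only
    nlinarith
  have h2 := Finset.sum_le_sum h
  rw [Finset.sum_range_sub (fun j => P.pts j^2/2 + δ * P.pts j) P.N, P.last, P.first] at h2
  linarith

lemma sum_le {t ε δ : ℝ} (P : TPartition 0 t) (hP : P.diamLE ε) :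
    ∑ i ∈ Finset.range P.N, (P.pts (i+1) - P.pts i) * (P.pts (i+1) + δ)
      ≤ t^2/2 + ε*t/2 + δ*t := by
  have h : ∀ i ∈ Finset.range P.N,
      (P.pts (i+1) - P.pts i) * (P.pts (i+1) + δ)
        ≤ ((fun j => P.pts j^2/2 + δ * P.pts j + ε * P.pts j / 2) (i+1)
            - (fun j => P.pts j^2/2 + δ * P.pts j + ε * P.pts j / 2) i) := by
    intro i hi
    have h1 := le_of_lt (P.mono i (Finset.mem_range.1 hi))
    have h2 := hP i (Finset.mem_range.1 hi)
    simp only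
    nlinarith
  have h2 := Finset.sum_le_sum h
  rw [Finset.sum_range_sub (fun j => P.pts j^2/2 + δ * P.pts j + ε * P.pts j / 2) P.N,
    P.last, P.first] at h2
  linarith

lemma etaSimple_eq {t : ℝ} (ht : 0 < t) : etaSimple t = ENNReal.ofReal t := by
  unfold etaSimple
  have key : ∀ P : TPartition 0 t, (∑ i ∈ Finset.range P.N,
      ⨆ x ∈ Set.Icc (0:ℝ) 1, edist (P.pts (i+1) * x) (P.pts i * x)) = ENNReal.ofReal t := by
    intro P
    have h : ∀ i ∈ Finset.range P.N,
        (⨆ x ∈ Set.Icc (0:ℝ) 1, edist (P.pts (i+1)*x) (P.pts i *x))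
          = ENNReal.ofReal (P.pts (i+1) - P.pts i) :=
      fun i hi => supA (le_of_lt (P.mono i (Finset.mem_range.1 hi)))
    rw [Finset.sum_congr rfl h, ← ENNReal.ofReal_sum_of_nonneg
      (fun i hi => sub_nonneg.2 (le_of_lt (P.mono i (Finset.mem_range.1 hi)))),
      Finset.sum_range_sub P.pts P.N, P.last, P.first, sub_zero]
  obtain ⟨P, _⟩ := exists_partition_diamLE ht one_pos
  haveI : Nonempty (TPartition 0 t) := ⟨P⟩
  rw [iSup_congr key, iSup_const]

lemma fEtaEps_le {t ε δ : ℝ} (hδ : 0 ≤ δ) :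
    fEtaEps (fun t x => t * x) (fun s : ℝ => s) δ ε 0 t
      ≤ ENNReal.ofReal (t^2/2 + ε*t/2 + δ*t) := by
  refine iSup₂_le fun P hP => ?_
  rw [fSum_eq hδ P]
  exact ENNReal.ofReal_le_ofReal (sum_le P hP)

lemma le_fEtaEps {t ε δ : ℝ} (ht : 0 < t) (hε : 0 < ε) (hδ : 0 ≤ δ) :
    ENNReal.ofReal (t^2/2 + δ*t)
      ≤ fEtaEps (fun t x => t * x) (fun s : ℝ => s) δ ε 0 t := by
  obtain ⟨P, hP⟩ := exists_partition_diamLE ht hε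
  refine le_trans ?_
    (le_iSup₂ (f := fun (P : TPartition 0 t) (_ : P.diamLE ε) =>
      fSum (fun t x => t * x) (fun s : ℝ => s) δ P) P hP)
  rw [fSum_eq hδ P]
  exact ENNReal.ofReal_le_ofReal (sum_ge P)

lemma fEtaDelta_eq {t δ : ℝ} (ht : 0 < t) (hδ : 0 < δ) :
    fEtaDelta (fun t x => t * x) (fun s : ℝ => s) δ 0 t
      = ENNReal.ofReal (t^2/2 + δ*t) := by
  apply le_antisymm
  · apply ENNReal.le_of_forall_pos_le_add
    intro c hc _
    have hcR : (0:ℝ) < c := hc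
    set ε : ℝ := 2*(c:ℝ)/t with hεdef
    have hε : 0 < ε := by positivity
    have hεt : ε * t / 2 = (c:ℝ) := by
      rw [hεdef]; field_simp
    calc fEtaDelta (fun t x => t * x) (fun s : ℝ => s) δ 0 t
        ≤ fEtaEps (fun t x => t * x) (fun s : ℝ => s) δ ε 0 t := iInf₂_le ε hε
      _ ≤ ENNReal.ofReal (t^2/2 + ε*t/2 + δ*t) := fEtaEps_le hδ.le
      _ = ENNReal.ofReal ((t^2/2 + δ*t) + ε*t/2) := by ring_nf
      _ = ENNReal.ofReal (t^2/2 + δ*t) + ENNReal.ofReal (ε*t/2) := by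
          rw [ENNReal.ofReal_add (by nlinarith) (by positivity)]
      _ = ENNReal.ofReal (t^2/2 + δ*t) + c := by
          rw [hεt, ENNReal.ofReal_coe_nnreal]
  · exact le_iInf₂ fun ε hε => le_fEtaEps ht hε hδ.le

lemma fEta_eq {t : ℝ} (ht : 0 < t) :
    fEta (fun t x => t * x) (fun s : ℝ => s) 0 t = ENNReal.ofReal (t^2/2) := by
  apply le_antisymm
  · apply ENNReal.le_of_forall_pos_le_add
    intro c hc _
    have hcR : (0:ℝ) < c := hc
    set δ : ℝ := (c:ℝ)/t with hδdef
    have hδ : 0 < δ := by positivity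
    have hδt : δ * t = (c:ℝ) := by rw [hδdef]; field_simp
    calc fEta (fun t x => t * x) (fun s : ℝ => s) 0 t
        ≤ fEtaDelta (fun t x => t * x) (fun s : ℝ => s) δ 0 t := iInf₂_le δ hδ
      _ = ENNReal.ofReal (t^2/2 + δ*t) := fEtaDelta_eq ht hδ
      _ = ENNReal.ofReal (t^2/2) + ENNReal.ofReal (δ*t) := by
          rw [ENNReal.ofReal_add (by positivity) (by positivity)]
      _ = ENNReal.ofReal (t^2/2) + c := by rw [hδt, ENNReal.ofReal_coe_nnreal]
  · refine le_iInf₂ fun δ hδ => ?_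
    rw [fEtaDelta_eq ht hδ]
    exact ENNReal.ofReal_le_ofReal (by nlinarith)

lemma etaSimple_zero : etaSimple 0 = 0 := by
  unfold etaSimple
  haveI := TPartition.isEmpty_partition_self
  rw [iSup_of_empty]
  rfl

lemma fEta_zero : fEta (fun t x => t * x) (fun s : ℝ => s) 0 0 = 0 := by
  have heps : ∀ δ ε : ℝ, fEtaEps (fun t x => t * x) (fun s : ℝ => s) δ ε 0 0 = 0 := by
    intro δ ε
    unfold fEtaEps
    haveI := TPartition.isEmpty_partition_self
    rw [iSup_of_empty]
    rfl
  have hdelta : ∀ δ : ℝ, fEtaDelta (fun t x => t * x) (fun s : ℝ => s) δ 0 0 = 0 := by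
    intro δ
    apply le_antisymm _ zero_le'
    calc fEtaDelta (fun t x => t * x) (fun s : ℝ => s) δ 0 0
        ≤ fEtaEps (fun t x => t * x) (fun s : ℝ => s) δ 1 0 0 := iInf₂_le 1 one_pos
      _ = 0 := heps δ 1
  apply le_antisymm _ zero_le'
  calc fEta (fun t x => t * x) (fun s : ℝ => s) 0 0
      ≤ fEtaDelta (fun t x => t * x) (fun s : ℝ => s) 1 0 0 := iInf₂_le 1 one_pos
    _ = 0 := hdelta 1

lemma etaSimple_eq' {t : ℝ} (ht : 0 ≤ t) : etaSimple t = ENNReal.ofReal t := by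
  rcases eq_or_lt_of_le ht with rfl | h
  · rw [etaSimple_zero, ENNReal.ofReal_zero]
  · exact etaSimple_eq h

lemma fEta_eq' {t : ℝ} (ht : 0 ≤ t) :
    fEta (fun t x => t * x) (fun s : ℝ => s) 0 t = ENNReal.ofReal (t^2/2) := by
  rcases eq_or_lt_of_le ht with rfl | h
  · rw [fEta_zero]; norm_num
  · exact fEta_eq h


/-- For `f(t,x) = t·x` on `[0,1] × ℝ` and `x̄(t) = t`:
(i) `η_simple(t) = t`; (ii) the cumulative variation function of `f(·,x)` along `x̄`
is `η(t) = t²/2`; and for every nontrivial `[s,t] ⊆ [0,1]`,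
`(η_simple(t) − η_simple(s)) − (η(t) − η(s)) = (t−s)(1−(t+s)/2) > 0`. -/
theorem statement11 :
    (∀ t ∈ Set.Icc (0 : ℝ) 1, etaSimple t = ENNReal.ofReal t) ∧
    (∀ t ∈ Set.Icc (0 : ℝ) 1,
      fEta (fun t x => t * x) (fun t => t) 0 t = ENNReal.ofReal (t ^ 2 / 2)) ∧
    ∀ s t : ℝ, 0 ≤ s → s < t → t ≤ 1 →
      (etaSimple t - etaSimple s) -
          (fEta (fun t x => t * x) (fun t => t) 0 t -
            fEta (fun t x => t * x) (fun t => t) 0 s) =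
        ENNReal.ofReal ((t - s) * (1 - (t + s) / 2)) ∧
      0 < ENNReal.ofReal ((t - s) * (1 - (t + s) / 2)) := by
  refine ⟨fun t ht => etaSimple_eq' ht.1, fun t ht => fEta_eq' ht.1, fun s t hs hst ht1 => ?_⟩
  have hs1 : s ≤ 1 := le_trans hst.le ht1
  have ht0 : 0 ≤ t := le_trans hs hst.le
  rw [etaSimple_eq' ht0, etaSimple_eq' hs, fEta_eq' ht0, fEta_eq' hs]
  constructor
  · rw [← ENNReal.ofReal_sub _ hs, ← ENNReal.ofReal_sub _ (by positivity),
      ← ENNReal.ofReal_sub _ (by nlinarith)]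
    congr 1
    ring
  · apply ENNReal.ofReal_pos.2
    have h1 : 0 < t - s := sub_pos.2 hst
    have h2 : 0 < 1 - (t + s)/2 := by nlinarith
    positivity


end
end
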